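/- arXiv:1809.03356 — 3 statements merged into one kernel-verified Lean document; each statement's English description precedes it below -/
import Mathlib

section
/- Let Q be a closable, orthogonally additive Hermitean quadratic form on a dense domain D in a direct integral Hilbert space H = ∫⊕_A H^α dμ(α). Then for any countable partition {Δᵢ}_{i∈ℕ} of a measurable set Δ and any Φ ∈ D, one has lim_{n→∞} Q(P_{∪_{i≥n} Δᵢ} Φ) = 0. -/
open MeasureTheory Filter Topology

/-- For a closable, orthogonally additive Hermitean quadratic form on a dense
domain of a direct integral Hilbert space (the direct integral structure is encoded by the
projection-valued measure `P`), the tails of partitions are negligible: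
`Q(P_{∪_{i≥n} Δᵢ} Φ) → 0`. -/
theorem stmt5 {A H : Type*} [MeasurableSpace A]
    [NormedAddCommGroup H] [InnerProductSpace ℂ H] [CompleteSpace H]
    (P : Set A → H →L[ℂ] H)
    (hPsa : ∀ Δ, MeasurableSet Δ → IsSelfAdjoint (P Δ))
    (hPmul : ∀ Δ₁ Δ₂, MeasurableSet Δ₁ → MeasurableSet Δ₂ →
      (P Δ₁).comp (P Δ₂) = P (Δ₁ ∩ Δ₂))
    (hPuniv : P Set.univ = 1)
    (hPsigma : ∀ (Δi : ℕ → Set A), (∀ i, MeasurableSet (Δi i)) →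
      Pairwise (Function.onFun Disjoint Δi) →
      ∀ x : H, HasSum (fun i => P (Δi i) x) (P (⋃ i, Δi i) x))
    (D : Submodule ℂ H) (hdense : Dense (D : Set H))
    (Q : H → ℝ)
    -- closability
    (hclos : ∀ Φ : ℕ → H, (∀ n, Φ n ∈ D) → Tendsto (fun n => Φ n) atTop (nhds 0) →
      Tendsto (fun p : ℕ × ℕ => Q (Φ p.1 - Φ p.2)) atTop (nhds 0) →
      Tendsto (fun n => Q (Φ n)) atTop (nhds 0))
    -- orthogonal additivity: stability of the domain
    (hstab : ∀ Δ, MeasurableSet Δ → ∀ Φ ∈ D, P Δ Φ ∈ D)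
    -- orthogonal additivity: Σ-boundedness
    (hbnd : ∀ Φ ∈ D, ∃ M > (0 : ℝ), ∀ Δ, MeasurableSet Δ → |Q (P Δ Φ)| < M)
    -- orthogonal additivity: finite additivity
    (hadd : ∀ (N : ℕ) (Δi : Fin N → Set A) (Δ : Set A), MeasurableSet Δ →
      (∀ i, MeasurableSet (Δi i)) → Pairwise (Function.onFun Disjoint Δi) →
      (⋃ i, Δi i) = Δ → ∀ Φ ∈ D, Q (P Δ Φ) = ∑ i, Q (P (Δi i) Φ))
    -- a countable measurable partition of Δ
    (Δi : ℕ → Set A) (Δ : Set A) (hΔ : MeasurableSet Δ)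
    (hΔi : ∀ i, MeasurableSet (Δi i)) (hdisj : Pairwise (Function.onFun Disjoint Δi))
    (hunion : (⋃ i, Δi i) = Δ) (Φ : H) (hΦ : Φ ∈ D) :
    Tendsto (fun n => Q (P (⋃ i, ⋃ (_ : n ≤ i), Δi i) Φ)) atTop (nhds 0) := by
  -- the tail sets
  set T : ℕ → Set A := fun n => ⋃ i, ⋃ (_ : n ≤ i), Δi i with hTdef
  have hTmeas : ∀ n, MeasurableSet (T n) := fun n =>
    MeasurableSet.iUnion fun i => MeasurableSet.iUnion fun _ => hΔi i
  -- P of the empty set vanishes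
  have hPempty : ∀ x : H, P ∅ x = 0 := by
    intro x
    have h := hPsigma (fun _ => ∅) (fun _ => MeasurableSet.empty)
      (fun i j _ => Set.disjoint_empty ∅) x
    rw [Set.iUnion_empty] at h
    have h0 : Tendsto (fun _ : ℕ => P ∅ x) atTop (𝓝 0) := h.summable.tendsto_atTop_zero
    exact (tendsto_nhds_unique tendsto_const_nhds h0)
  -- finite additivity of P on disjoint sets
  have haddP : ∀ U V : Set A, MeasurableSet U → MeasurableSet V → Disjoint U V →
      ∀ x : H, P (U ∪ V) x = P U x + P V x := by
    intro U V hU hV hUV x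
    set g : ℕ → Set A := fun k => if k = 0 then U else if k = 1 then V else ∅ with hg
    have hg0 : g 0 = U := by simp [g]
    have hg1 : g 1 = V := by simp [g]
    have hgE : ∀ k, k ≠ 0 → k ≠ 1 → g k = ∅ := by intro k h0 h1; simp [g, h0, h1]
    have hgm : ∀ k, MeasurableSet (g k) := by
      intro k
      by_cases h0 : k = 0
      · rw [h0, hg0]; exact hU
      · by_cases h1 : k = 1
        · rw [h1, hg1]; exact hV
        · rw [hgE k h0 h1]; exact MeasurableSet.empty
    have hgd : Pairwise (Function.onFun Disjoint g) := by
      intro i j hij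
      simp only [Function.onFun]
      by_cases hi0 : i = 0
      · by_cases hj1 : j = 1
        · rw [hi0, hj1, hg0, hg1]; exact hUV
        · rw [hgE j (by omega) hj1]; exact Set.disjoint_empty _
      · by_cases hi1 : i = 1
        · by_cases hj0 : j = 0
          · rw [hi1, hj0, hg0, hg1]; exact hUV.symm
          · rw [hgE j hj0 (by omega)]; exact Set.disjoint_empty _
        · rw [hgE i hi0 hi1]; exact Set.empty_disjoint _
    have hgu : (⋃ k, g k) = U ∪ V := by
      apply Set.Subset.antisymm
      · intro y hy
        rcases Set.mem_iUnion.1 hy with ⟨k, hk⟩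
        by_cases h0 : k = 0
        · rw [h0, hg0] at hk; exact Or.inl hk
        · by_cases h1 : k = 1
          · rw [h1, hg1] at hk; exact Or.inr hk
          · rw [hgE k h0 h1] at hk; exact absurd hk (Set.notMem_empty y)
      · intro y hy
        rcases hy with h|h
        · exact Set.mem_iUnion.2 ⟨0, by rw [hg0]; exact h⟩
        · exact Set.mem_iUnion.2 ⟨1, by rw [hg1]; exact h⟩
    have h := hPsigma g hgm hgd x
    rw [hgu] at h
    have h2 : HasSum (fun k => P (g k) x) (∑ k ∈ ({0, 1} : Finset ℕ), P (g k) x) := by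
      apply hasSum_sum_of_ne_finset_zero
      intro b hb
      simp only [Finset.mem_insert, Finset.mem_singleton, not_or] at hb
      rw [hgE b hb.1 hb.2]
      exact hPempty x
    have h3 : (∑ k ∈ ({0, 1} : Finset ℕ), P (g k) x) = P U x + P V x := by
      rw [Finset.sum_pair (by norm_num : (0 : ℕ) ≠ 1), hg0, hg1]
    rw [h3] at h2
    exact h.unique h2
  -- full sum
  have hfull : HasSum (fun i => P (Δi i) Φ) (P Δ Φ) := by
    have := hPsigma Δi hΔi hdisj Φ
    rwa [hunion] at this
  -- tail description
  have htail : ∀ n, HasSum (fun i => P (Δi (i + n)) Φ) (P (T n) Φ) := by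
    intro n
    have hu : (⋃ i, Δi (i + n)) = T n := by
      apply Set.Subset.antisymm
      · intro y hy
        rcases Set.mem_iUnion.1 hy with ⟨i, hi⟩
        exact Set.mem_iUnion.2 ⟨i + n, Set.mem_iUnion.2 ⟨Nat.le_add_left n i, hi⟩⟩
      · intro y hy
        rcases Set.mem_iUnion.1 hy with ⟨i, hi⟩
        rcases Set.mem_iUnion.1 hi with ⟨hni, hyi⟩
        exact Set.mem_iUnion.2 ⟨i - n, by rwa [Nat.sub_add_cancel hni]⟩
    have := hPsigma (fun i => Δi (i + n)) (fun i => hΔi _)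
      (fun i j hij => hdisj (by omega)) Φ
    rwa [hu] at this
  -- tails as differences of partial sums
  have hΨeq : ∀ n, P (T n) Φ = P Δ Φ - ∑ i ∈ Finset.range n, P (Δi i) Φ := by
    intro n
    have h1 := (hasSum_nat_add_iff (f := fun i => P (Δi i) Φ) n).1 (htail n)
    have := hfull.unique h1
    rw [this]; abel
  -- the tails tend to zero in H
  have hΨ0 : Tendsto (fun n => P (T n) Φ) atTop (𝓝 0) := by
    have h := hfull.tendsto_sum_nat
    have : Tendsto (fun n => P Δ Φ - ∑ i ∈ Finset.range n, P (Δi i) Φ) atTop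
        (𝓝 (P Δ Φ - P Δ Φ)) := tendsto_const_nhds.sub h
    rw [sub_self] at this
    exact this.congr fun n => (hΨeq n).symm
  -- the middle sets
  set S : ℕ → ℕ → Set A := fun m n => ⋃ i ∈ Finset.Ico m n, Δi i with hSdef
  have hSmeas : ∀ m n, MeasurableSet (S m n) := fun m n =>
    MeasurableSet.biUnion (Finset.Ico m n).countable_toSet fun i _ => hΔi i
  have hSdisjT : ∀ m n, Disjoint (S m n) (T n) := by
    intro m n
    rw [Set.disjoint_iUnion_left]
    intro i
    rw [Set.disjoint_iUnion_left]
    intro hi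
    rw [Set.disjoint_iUnion_right]
    intro j
    rw [Set.disjoint_iUnion_right]
    intro hj
    exact hdisj (by simp [Finset.mem_Ico] at hi; omega)
  have hSunion : ∀ m n, m ≤ n → S m n ∪ T n = T m := by
    intro m n hmn
    apply Set.Subset.antisymm
    · intro y hy
      rcases hy with h|h
      · rw [Set.mem_iUnion₂] at h
        rcases h with ⟨i, hi, hyi⟩
        rw [Finset.mem_Ico] at hi
        exact Set.mem_iUnion.2 ⟨i, Set.mem_iUnion.2 ⟨hi.1, hyi⟩⟩
      · rcases Set.mem_iUnion.1 h with ⟨i, hi⟩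
        rcases Set.mem_iUnion.1 hi with ⟨hni, hyi⟩
        exact Set.mem_iUnion.2 ⟨i, Set.mem_iUnion.2 ⟨hmn.trans hni, hyi⟩⟩
    · intro y hy
      rcases Set.mem_iUnion.1 hy with ⟨i, hi⟩
      rcases Set.mem_iUnion.1 hi with ⟨hmi, hyi⟩
      by_cases hin : i < n
      · exact Or.inl (Set.mem_iUnion₂.2 ⟨i, Finset.mem_Ico.2 ⟨hmi, hin⟩, hyi⟩)
      · exact Or.inr (Set.mem_iUnion.2 ⟨i, Set.mem_iUnion.2 ⟨le_of_not_gt hin, hyi⟩⟩)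
  have hPS : ∀ m n, m ≤ n → ∀ x : H, P (S m n) x = P (T m) x - P (T n) x := by
    intro m n hmn x
    have := haddP (S m n) (T n) (hSmeas m n) (hTmeas n) (hSdisjT m n) x
    rw [hSunion m n hmn] at this
    rw [this]; abel
  -- Q splits along S/T
  have hQsplit : ∀ Φ' ∈ D, ∀ m n, m ≤ n →
      Q (P (T m) Φ') = Q (P (S m n) Φ') + Q (P (T n) Φ') := by
    intro Φ' hΦ' m n hmn
    set f : Fin 2 → Set A := fun j => if j = 0 then S m n else T n with hf
    have hf0 : f 0 = S m n := if_pos rfl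
    have hf1 : f 1 = T n := if_neg (by decide)
    have hfm : ∀ j, MeasurableSet (f j) := by
      intro j
      fin_cases j
      · exact hSmeas m n
      · exact hTmeas n
    have hfd : Pairwise (Function.onFun Disjoint f) := by
      intro i j hij
      simp only [Function.onFun]
      fin_cases i <;> fin_cases j
      · exact absurd rfl hij
      · exact hSdisjT m n
      · exact (hSdisjT m n).symm
      · exact absurd rfl hij
    have hfu : (⋃ j, f j) = T m := by
      rw [show (⋃ j, f j) = S m n ∪ T n by
        apply Set.Subset.antisymm
        · intro y hy
          rcases Set.mem_iUnion.1 hy with ⟨j, hj⟩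
          fin_cases j
          · exact Or.inl hj
          · exact Or.inr hj
        · rintro y (h|h)
          · exact Set.mem_iUnion.2 ⟨0, by rw [hf0]; exact h⟩
          · exact Set.mem_iUnion.2 ⟨1, by rw [hf1]; exact h⟩]
      exact hSunion m n hmn
    have h := hadd 2 f (T m) (hTmeas m) hfm hfd hfu Φ' hΦ'
    rw [Fin.sum_univ_two, hf0, hf1] at h
    exact h
  -- Q is finitely additive over finsets of indices
  have hQfin : ∀ Φ' ∈ D, ∀ F : Finset ℕ,
      Q (P (⋃ i ∈ F, Δi i) Φ') = ∑ i ∈ F, Q (P (Δi i) Φ') := by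
    intro Φ' hΦ' F
    have e : Fin F.card ≃ {x // x ∈ F} := F.equivFin.symm
    have h := hadd F.card (fun j => Δi (e j : ℕ)) (⋃ i ∈ F, Δi i)
      (MeasurableSet.biUnion F.countable_toSet fun i _ => hΔi i)
      (fun j => hΔi _)
      (by
        intro i j hij
        exact hdisj (fun hc => hij (e.injective (Subtype.ext hc))))
      (by
        apply Set.Subset.antisymm
        · intro y hy
          rcases Set.mem_iUnion.1 hy with ⟨j, hj⟩
          exact Set.mem_iUnion₂.2 ⟨(e j : ℕ), (e j).2, hj⟩
        · intro y hy
          rcases Set.mem_iUnion₂.1 hy with ⟨i, hi, hyi⟩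
          exact Set.mem_iUnion.2 ⟨e.symm ⟨i, hi⟩, by simp [hyi]⟩) Φ' hΦ'
    rw [h]
    rw [← Finset.sum_coe_sort F (fun i => Q (P (Δi i) Φ'))]
    exact Fintype.sum_equiv e _ _ (fun j => rfl)
  -- convergence of the tail values of Q, for any vector in D
  have key : ∀ Φ' ∈ D, ∃ L : ℝ, Tendsto (fun n => Q (P (T n) Φ')) atTop (𝓝 L) := by
    intro Φ' hΦ'
    set a : ℕ → ℝ := fun i => Q (P (Δi i) Φ') with ha
    obtain ⟨M, hMpos, hM⟩ := hbnd Φ' hΦ'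
    have hFbnd : ∀ F : Finset ℕ, |∑ i ∈ F, a i| ≤ M := by
      intro F
      rw [← hQfin Φ' hΦ' F]
      exact le_of_lt (hM _ (MeasurableSet.biUnion F.countable_toSet fun i _ => hΔi i))
    -- summability of a
    have hsumm : Summable a := by
      have hpos : Summable (fun i => max (a i) 0) := by
        apply summable_of_sum_range_le (fun n => le_max_right _ _)
        intro n
        have : ∑ i ∈ Finset.range n, max (a i) 0
            = ∑ i ∈ (Finset.range n).filter (fun i => 0 ≤ a i), a i := by
          rw [Finset.sum_filter]
          apply Finset.sum_congr rfl
          intro i _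
          rcases le_or_gt 0 (a i) with h|h
          · simp [h, max_eq_left h]
          · simp [not_le.2 h, max_eq_right (le_of_lt h)]
        rw [this]
        exact (abs_le.1 (hFbnd _)).2
      have hneg : Summable (fun i => max (-a i) 0) := by
        apply summable_of_sum_range_le (fun n => le_max_right _ _)
        intro n
        have : ∑ i ∈ Finset.range n, max (-a i) 0
            = -∑ i ∈ (Finset.range n).filter (fun i => a i ≤ 0), a i := by
          rw [← Finset.sum_neg_distrib, Finset.sum_filter]
          apply Finset.sum_congr rfl
          intro i _
          rcases le_or_gt (a i) 0 with h|h
          · simp [h, max_eq_left (neg_nonneg.2 h)]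
          · simp [not_le.2 h, max_eq_right (neg_nonpos.2 (le_of_lt h))]
        rw [this]
        have := (abs_le.1 (hFbnd ((Finset.range n).filter (fun i => a i ≤ 0)))).1
        linarith
      have : a = fun i => max (a i) 0 - max (-a i) 0 := by
        funext i
        rcases le_total 0 (a i) with h|h
        · simp [max_eq_left h, max_eq_right (neg_nonpos.2 h)]
        · simp [max_eq_right h, max_eq_left (neg_nonneg.2 h)]
      rw [this]
      exact hpos.sub hneg
    -- tail values in terms of partial sums
    have hval : ∀ n, Q (P (T n) Φ') = Q (P (T 0) Φ') - ∑ i ∈ Finset.range n, a i := by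
      intro n
      have h := hQsplit Φ' hΦ' 0 n (Nat.zero_le n)
      have hS0 : Q (P (S 0 n) Φ') = ∑ i ∈ Finset.range n, a i := by
        have := hQfin Φ' hΦ' (Finset.Ico 0 n)
        rw [Finset.range_eq_Ico]
        exact this
      rw [h, hS0]; ring
    refine ⟨Q (P (T 0) Φ') - ∑' i, a i, ?_⟩
    have hc : Tendsto (fun _ : ℕ => Q (P (T 0) Φ')) atTop (𝓝 (Q (P (T 0) Φ'))) :=
      tendsto_const_nhds
    have := hc.sub hsumm.hasSum.tendsto_sum_nat
    exact Tendsto.congr (fun n => (hval n).symm) this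
  obtain ⟨L, hr⟩ := key Φ hΦ
  obtain ⟨L', hr'⟩ := key (-Φ) (neg_mem hΦ)
  -- Q of differences between tails
  have hQdiff : ∀ Φ' ∈ D, ∀ m n, m ≤ n →
      Q (P (T m) Φ' - P (T n) Φ') = Q (P (T m) Φ') - Q (P (T n) Φ') := by
    intro Φ' hΦ' m n hmn
    rw [← hPS m n hmn Φ', hQsplit Φ' hΦ' m n hmn]
    ring
  -- the Cauchy/difference condition
  have hfst : Tendsto (fun p : ℕ × ℕ => p.1) atTop atTop := by
    rw [← Filter.prod_atTop_atTop_eq]; exact tendsto_fst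
  have hsnd : Tendsto (fun p : ℕ × ℕ => p.2) atTop atTop := by
    rw [← Filter.prod_atTop_atTop_eq]; exact tendsto_snd
  have hbound : Tendsto (fun p : ℕ × ℕ =>
      |Q (P (T p.1) Φ) - Q (P (T p.2) Φ)| +
      |Q (P (T p.1) (-Φ)) - Q (P (T p.2) (-Φ))|) atTop (𝓝 0) := by
    have h1 : Tendsto (fun p : ℕ × ℕ => |Q (P (T p.1) Φ) - Q (P (T p.2) Φ)|)
        atTop (𝓝 0) := by
      have := ((hr.comp hfst).sub (hr.comp hsnd))
      rw [sub_self] at this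
      simpa using this.abs
    have h2 : Tendsto (fun p : ℕ × ℕ => |Q (P (T p.1) (-Φ)) - Q (P (T p.2) (-Φ))|)
        atTop (𝓝 0) := by
      have := ((hr'.comp hfst).sub (hr'.comp hsnd))
      rw [sub_self] at this
      simpa using this.abs
    simpa using h1.add h2
  have hdiff0 : Tendsto (fun p : ℕ × ℕ => Q (P (T p.1) Φ - P (T p.2) Φ)) atTop (𝓝 0) := by
    apply squeeze_zero_norm _ hbound
    intro p
    rw [Real.norm_eq_abs]
    rcases le_total p.1 p.2 with h|h
    · rw [hQdiff Φ hΦ p.1 p.2 h]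
      exact le_add_of_nonneg_right (abs_nonneg _) |>.trans_eq rfl
    · have hv : P (T p.1) Φ - P (T p.2) Φ = P (T p.2) (-Φ) - P (T p.1) (-Φ) := by
        rw [map_neg, map_neg]; abel
      rw [hv, hQdiff (-Φ) (neg_mem hΦ) p.2 p.1 h]
      rw [abs_sub_comm]
      exact le_add_of_nonneg_left (abs_nonneg _)
  exact hclos (fun n => P (T n) Φ) (fun n => hstab _ (hTmeas n) Φ hΦ) hΨ0 hdiff0
end

section
/- Let Q be a closable, orthogonally additive Hermitean quadratic form on a dense domain D in a direct integral Hilbert space H. Then Q is countably orthogonally additive: for any countable measurable partition {Δᵢ}_{i∈ℕ} of Δ ∈ Σ(A) and any Φ ∈ D, Q(P_Δ Φ) = Σ_{i=1}^∞ Q(P_{Δᵢ} Φ), with the series convergent. -/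
open MeasureTheory Filter Topology

/-- For a closable, orthogonally additive Hermitean quadratic form on a dense
domain of a direct integral Hilbert space (the direct integral structure is encoded by the
projection-valued measure `P`), the tails of partitions are negligible:
the form is countably orthogonally additive. (STATEMENT 6) -/
theorem stmt6 {A H : Type*} [MeasurableSpace A]
    [NormedAddCommGroup H] [InnerProductSpace ℂ H] [CompleteSpace H]
    (P : Set A → H →L[ℂ] H)
    (hPsa : ∀ Δ, MeasurableSet Δ → IsSelfAdjoint (P Δ))
    (hPmul : ∀ Δ₁ Δ₂, MeasurableSet Δ₁ → MeasurableSet Δ₂ →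
      (P Δ₁).comp (P Δ₂) = P (Δ₁ ∩ Δ₂))
    (hPuniv : P Set.univ = 1)
    (hPsigma : ∀ (Δi : ℕ → Set A), (∀ i, MeasurableSet (Δi i)) →
      Pairwise (Function.onFun Disjoint Δi) →
      ∀ x : H, HasSum (fun i => P (Δi i) x) (P (⋃ i, Δi i) x))
    (D : Submodule ℂ H) (hdense : Dense (D : Set H))
    (Q : H → ℝ)
    -- closability
    (hclos : ∀ Φ : ℕ → H, (∀ n, Φ n ∈ D) → Tendsto (fun n => Φ n) atTop (nhds 0) →
      Tendsto (fun p : ℕ × ℕ => Q (Φ p.1 - Φ p.2)) atTop (nhds 0) →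
      Tendsto (fun n => Q (Φ n)) atTop (nhds 0))
    -- orthogonal additivity: stability of the domain
    (hstab : ∀ Δ, MeasurableSet Δ → ∀ Φ ∈ D, P Δ Φ ∈ D)
    -- orthogonal additivity: Σ-boundedness
    (hbnd : ∀ Φ ∈ D, ∃ M > (0 : ℝ), ∀ Δ, MeasurableSet Δ → |Q (P Δ Φ)| < M)
    -- orthogonal additivity: finite additivity
    (hadd : ∀ (N : ℕ) (Δi : Fin N → Set A) (Δ : Set A), MeasurableSet Δ →
      (∀ i, MeasurableSet (Δi i)) → Pairwise (Function.onFun Disjoint Δi) →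
      (⋃ i, Δi i) = Δ → ∀ Φ ∈ D, Q (P Δ Φ) = ∑ i, Q (P (Δi i) Φ))
 :
    -- countable orthogonal additivity
    ∀ (Δi : ℕ → Set A) (Δ : Set A), MeasurableSet Δ →
      (∀ i, MeasurableSet (Δi i)) → Pairwise (Function.onFun Disjoint Δi) →
      (⋃ i, Δi i) = Δ → ∀ Φ ∈ D,
        HasSum (fun i => Q (P (Δi i) Φ)) (Q (P Δ Φ)) := by
  -- P ∅ x = 0
  have hP0 : ∀ x : H, P ∅ x = 0 := by
    intro x
    have h := hPsigma (fun _ => ∅) (fun _ => MeasurableSet.empty)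
      (fun i j hij => by simp [Function.onFun]) x
    simp only [Set.iUnion_empty] at h
    exact tendsto_nhds_unique tendsto_const_nhds h.summable.tendsto_atTop_zero
  intro Δi Δ hΔ hmeas hdisj hUnion Φ hΦ
  -- vector-valued finite additivity of P over finite index sets
  have hPfin : ∀ (F : Finset ℕ) (x : H),
      P (⋃ i ∈ F, Δi i) x = ∑ i ∈ F, P (Δi i) x := by
    intro F x
    set g : ℕ → Set A := fun j => if j ∈ F then Δi j else ∅ with hg
    have hgm : ∀ j, MeasurableSet (g j) := by
      intro j; by_cases h : j ∈ F <;> simp [g, h, hmeas j]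
    have hgd : Pairwise (Function.onFun Disjoint g) := by
      intro i j hij
      by_cases hi : i ∈ F <;> by_cases hj : j ∈ F <;>
        simp [Function.onFun, g, hi, hj]
      exact hdisj hij
    have hU : (⋃ j, g j) = ⋃ i ∈ F, Δi i := by
      apply Set.Subset.antisymm
      · intro a ha
        rcases Set.mem_iUnion.1 ha with ⟨j, hj⟩
        by_cases h : j ∈ F
        · exact Set.mem_biUnion h (by simpa [g, h] using hj)
        · simp [g, h] at hj
      · intro a ha
        rcases Set.mem_iUnion₂.1 ha with ⟨j, hjF, hj⟩
        exact Set.mem_iUnion.2 ⟨j, by simpa [g, hjF] using hj⟩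
    have hs := hPsigma g hgm hgd x
    rw [hU] at hs
    have hzero : ∀ j ∉ F, P (g j) x = 0 := by
      intro j hj; simp [g, hj, hP0]
    have hs2 : HasSum (fun j => P (g j) x) (∑ j ∈ F, P (g j) x) :=
      hasSum_sum_of_ne_finset_zero hzero
    rw [hs.unique hs2]
    exact Finset.sum_congr rfl (fun j hj => by simp [g, hj])
  -- Q-additivity over finite index sets
  have hQfin : ∀ (F : Finset ℕ) (ψ : H), ψ ∈ D →
      Q (P (⋃ i ∈ F, Δi i) ψ) = ∑ i ∈ F, Q (P (Δi i) ψ) := by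
    intro F ψ hψ
    set e := F.orderIsoOfFin rfl with he
    have hUm : MeasurableSet (⋃ i ∈ F, Δi i) :=
      F.measurableSet_biUnion (fun i _ => hmeas i)
    have hgd : Pairwise (Function.onFun Disjoint (fun j : Fin F.card => Δi (e j))) := by
      intro j k hjk
      have : ((e j : ℕ)) ≠ ((e k : ℕ)) := by
        intro h
        exact hjk (e.injective (Subtype.ext h))
      exact hdisj this
    have hU : (⋃ j : Fin F.card, Δi (e j)) = ⋃ i ∈ F, Δi i := by
      apply Set.Subset.antisymm
      · intro a ha
        rcases Set.mem_iUnion.1 ha with ⟨j, hj⟩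
        exact Set.mem_biUnion (e j).2 hj
      · intro a ha
        rcases Set.mem_iUnion₂.1 ha with ⟨i, hiF, hi⟩
        refine Set.mem_iUnion.2 ⟨e.symm ⟨i, hiF⟩, ?_⟩
        simpa using hi
    have h1 := hadd F.card (fun j => Δi (e j)) (⋃ i ∈ F, Δi i) hUm
      (fun j => hmeas _) hgd hU ψ hψ
    rw [h1]
    rw [← Finset.sum_coe_sort F (fun i => Q (P (Δi i) ψ))]
    exact Fintype.sum_equiv e.toEquiv _ _ (fun j => rfl)
  -- summability of the Q-series for any vector in D
  have hsum : ∀ ψ : H, ψ ∈ D → Summable (fun i => Q (P (Δi i) ψ)) := by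
    intro ψ hψ
    obtain ⟨M, hM0, hM⟩ := hbnd ψ hψ
    set a : ℕ → ℝ := fun i => Q (P (Δi i) ψ) with ha
    have hUm : ∀ F : Finset ℕ, MeasurableSet (⋃ i ∈ F, Δi i) :=
      fun F => F.measurableSet_biUnion (fun i _ => hmeas i)
    have hFb : ∀ F : Finset ℕ, |∑ i ∈ F, a i| < M := by
      intro F
      rw [← hQfin F ψ hψ]
      exact hM _ (hUm F)
    apply Summable.of_abs
    apply summable_of_sum_le (c := 2 * M) (fun i => abs_nonneg (a i))
    intro F
    have h1 : ∑ i ∈ F, |a i|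
        = ∑ i ∈ F.filter (fun i => 0 ≤ a i), a i
          - ∑ i ∈ F.filter (fun i => ¬ 0 ≤ a i), a i := by
      rw [← Finset.sum_filter_add_sum_filter_not F (fun i => 0 ≤ a i) (fun i => |a i|)]
      rw [Finset.sum_congr rfl (fun i hi => abs_of_nonneg (Finset.mem_filter.1 hi).2)]
      rw [Finset.sum_congr rfl
        (fun i hi => abs_of_neg (lt_of_not_ge (Finset.mem_filter.1 hi).2))]
      simp only [Finset.sum_neg_distrib, ge_iff_le]
      ring
    have h2 := hFb (F.filter (fun i => 0 ≤ a i))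
    have h3 := hFb (F.filter (fun i => ¬ 0 ≤ a i))
    rw [h1]
    have h4 := abs_le.1 h2.le
    have h5 := abs_le.1 h3.le
    linarith [h4.1, h4.2, h5.1, h5.2]
  -- the series of P-vectors
  set f : ℕ → H := fun i => P (Δi i) Φ with hf
  have hHS : HasSum f (P Δ Φ) := by
    have := hPsigma Δi hmeas hdisj Φ
    rwa [hUnion] at this
  -- tails
  set T : ℕ → Set A := fun n => ⋃ i, Δi (i + n) with hT
  have hTmeas : ∀ n, MeasurableSet (T n) := fun n => MeasurableSet.iUnion (fun i => hmeas _)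
  set Ψ : ℕ → H := fun n => P (T n) Φ with hΨ
  have hΨD : ∀ n, Ψ n ∈ D := fun n => hstab _ (hTmeas n) Φ hΦ
  have hΨeq : ∀ n, Ψ n = P Δ Φ - ∑ i ∈ Finset.range n, f i := by
    intro n
    have hshift : Pairwise (Function.onFun Disjoint (fun i => Δi (i + n))) := by
      intro i j hij
      exact hdisj (fun h => hij (by omega))
    have h1 := hPsigma (fun i => Δi (i + n)) (fun i => hmeas _) hshift Φ
    have h2 : HasSum (fun i => f (i + n)) (P Δ Φ - ∑ i ∈ Finset.range n, f i) := by
      rw [hasSum_nat_add_iff n]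
      simpa using hHS
    exact h1.unique h2
  have hpart : Tendsto (fun n => ∑ i ∈ Finset.range n, f i) atTop (nhds (P Δ Φ)) :=
    hHS.tendsto_sum_nat
  have hΨ0 : Tendsto Ψ atTop (nhds 0) := by
    have h1 : Tendsto (fun n => P Δ Φ - ∑ i ∈ Finset.range n, f i) atTop
        (nhds (P Δ Φ - P Δ Φ)) := tendsto_const_nhds.sub hpart
    rw [sub_self] at h1
    exact h1.congr (fun n => (hΨeq n).symm)
  -- difference identity
  have hdiff : ∀ m n : ℕ, m ≤ n →
      Ψ m - Ψ n = P (⋃ i ∈ Finset.Ico m n, Δi i) Φ := by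
    intro m n hmn
    rw [hΨeq m, hΨeq n, hPfin (Finset.Ico m n) Φ, Finset.sum_Ico_eq_sub f hmn]
    abel
  have hnegD : (-Φ : H) ∈ D := neg_mem hΦ
  set a : ℕ → ℝ := fun i => Q (P (Δi i) Φ) with haa
  set b : ℕ → ℝ := fun i => Q (P (Δi i) (-Φ)) with hbb
  set c : ℕ → ℝ := fun i => |a i| + |b i| with hcc
  have hsumc : Summable c := ((hsum Φ hΦ).abs).add ((hsum (-Φ) hnegD).abs)
  -- Q-Cauchy
  have hQdiff : ∀ m n : ℕ, m ≤ n →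
      Q (Ψ m - Ψ n) = ∑ i ∈ Finset.Ico m n, a i := by
    intro m n hmn
    rw [hdiff m n hmn]
    exact hQfin _ Φ hΦ
  have hQdiff' : ∀ m n : ℕ, m ≤ n →
      Q (Ψ n - Ψ m) = ∑ i ∈ Finset.Ico m n, b i := by
    intro m n hmn
    have h1 : Ψ n - Ψ m = P (⋃ i ∈ Finset.Ico m n, Δi i) (-Φ) := by
      rw [map_neg, ← hdiff m n hmn]; abel
    rw [h1]
    exact hQfin _ (-Φ) hnegD
  set S : ℕ → ℝ := fun n => ∑ i ∈ Finset.range n, c i with hS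
  have hScauchy : CauchySeq S := hsumc.hasSum.tendsto_sum_nat.cauchySeq
  have hQcauchy : Tendsto (fun p : ℕ × ℕ => Q (Ψ p.1 - Ψ p.2)) atTop (nhds 0) := by
    rw [Metric.tendsto_atTop]
    intro ε hε
    obtain ⟨N, hN⟩ := Metric.cauchySeq_iff.1 hScauchy ε hε
    refine ⟨(N, N), ?_⟩
    rintro ⟨m, n⟩ ⟨hm, hn⟩
    simp only [Real.dist_eq, sub_zero]
    have key : ∀ m' n' : ℕ, N ≤ m' → N ≤ n' → m' ≤ n' →
        ∑ i ∈ Finset.Ico m' n', c i < ε := by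
      intro m' n' hm' hn' hmn
      have h1 := hN m' hm' n' hn'
      rw [Real.dist_eq] at h1
      have h2 : ∑ i ∈ Finset.Ico m' n', c i = S n' - S m' :=
        Finset.sum_Ico_eq_sub c hmn
      rw [h2]
      calc S n' - S m' ≤ |S n' - S m'| := le_abs_self _
        _ = |S m' - S n'| := abs_sub_comm _ _
        _ < ε := h1
    rcases le_total m n with hc | hc
    · rw [hQdiff m n hc]
      calc |∑ i ∈ Finset.Ico m n, a i| ≤ ∑ i ∈ Finset.Ico m n, |a i| :=
            Finset.abs_sum_le_sum_abs _ _
        _ ≤ ∑ i ∈ Finset.Ico m n, c i :=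
            Finset.sum_le_sum (fun i _ => le_add_of_nonneg_right (abs_nonneg _))
        _ < ε := key m n hm hn hc
    · rw [hQdiff' n m hc]
      calc |∑ i ∈ Finset.Ico n m, b i| ≤ ∑ i ∈ Finset.Ico n m, |b i| :=
            Finset.abs_sum_le_sum_abs _ _
        _ ≤ ∑ i ∈ Finset.Ico n m, c i :=
            Finset.sum_le_sum (fun i _ => le_add_of_nonneg_left (abs_nonneg _))
        _ < ε := key n m hn hm hc
  have hQ0 : Tendsto (fun n => Q (Ψ n)) atTop (nhds 0) := hclos Ψ hΨD hΨ0 hQcauchy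
  -- finite splitting of Q (P Δ Φ)
  have hsplit : ∀ n : ℕ, Q (P Δ Φ) = ∑ i ∈ Finset.range n, a i + Q (Ψ n) := by
    intro n
    set g : Fin (n + 1) → Set A := fun j => if (j : ℕ) < n then Δi j else T n with hgdef
    have hgm : ∀ j, MeasurableSet (g j) := by
      intro j
      by_cases h : (j : ℕ) < n <;> simp only [g, h, if_true, if_false]
      exacts [hmeas _, hTmeas n]
    have hdisjT : ∀ j : ℕ, j < n → Disjoint (Δi j) (T n) := by
      intro j hj
      rw [Set.disjoint_iUnion_right]
      intro i
      exact hdisj (show j ≠ i + n by omega)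
    have hgd : Pairwise (Function.onFun Disjoint g) := by
      intro j k hjk
      unfold Function.onFun
      by_cases hjn : (j : ℕ) < n <;> by_cases hkn : (k : ℕ) < n <;>
        simp only [g, hjn, hkn, if_true, if_false]
      · exact hdisj (fun h => hjk (Fin.ext h))
      · exact hdisjT j hjn
      · exact (hdisjT k hkn).symm
      · exact absurd (Fin.ext (show (j : ℕ) = (k : ℕ) by omega)) hjk
    have hgU : (⋃ j, g j) = Δ := by
      rw [← hUnion]
      apply Set.Subset.antisymm
      · intro x hx
        rcases Set.mem_iUnion.1 hx with ⟨j, hj⟩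
        by_cases h : (j : ℕ) < n
        · simp only [g, h, if_true] at hj
          exact Set.mem_iUnion.2 ⟨j, hj⟩
        · simp only [g, h, if_false] at hj
          rcases Set.mem_iUnion.1 hj with ⟨i, hi⟩
          exact Set.mem_iUnion.2 ⟨i + n, hi⟩
      · intro x hx
        rcases Set.mem_iUnion.1 hx with ⟨i, hi⟩
        by_cases h : i < n
        · exact Set.mem_iUnion.2 ⟨⟨i, by omega⟩, by simp [g, h]; exact hi⟩
        · refine Set.mem_iUnion.2 ⟨Fin.last n, ?_⟩
          simp only [g, Fin.val_last, lt_irrefl, if_false]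
          exact Set.mem_iUnion.2 ⟨i - n, by rwa [Nat.sub_add_cancel (le_of_not_gt h)]⟩
    have h1 := hadd (n + 1) g Δ hΔ hgm hgd hgU Φ hΦ
    rw [h1, Fin.sum_univ_castSucc]
    congr 1
    · rw [← Fin.sum_univ_eq_sum_range a n]
      apply Finset.sum_congr rfl
      intro j _
      simp only [g, Fin.coe_castSucc, Fin.is_lt, if_true]
      rfl
    · simp only [g, Fin.val_last, lt_irrefl, if_false]
      rfl
  have hparta : Tendsto (fun n => ∑ i ∈ Finset.range n, a i) atTop (nhds (Q (P Δ Φ))) := by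
    have h1 : Tendsto (fun n => Q (P Δ Φ) - Q (Ψ n)) atTop (nhds (Q (P Δ Φ) - 0)) :=
      tendsto_const_nhds.sub hQ0
    rw [sub_zero] at h1
    exact h1.congr (fun n => by rw [hsplit n]; ring)
  have hSa : HasSum a (∑' i, a i) := (hsum Φ hΦ).hasSum
  have : (∑' i, a i) = Q (P Δ Φ) :=
    tendsto_nhds_unique hSa.tendsto_sum_nat hparta
  rwa [this] at hSa
end

section
/- A closable Hermitean quadratic form Q on a dense domain D in a direct integral Hilbert space H is orthogonally additive if and only if it is countably orthogonally additive. -/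
open MeasureTheory Filter Topology

section Aux
variable {A : Type*} [MeasurableSpace A]

lemma stmt11_sm_abs_le (ν : MeasureTheory.SignedMeasure A) (Δ : Set A) :
    |ν Δ| ≤ (ν.totalVariation Set.univ).toReal := by
  by_cases hΔ : MeasurableSet Δ
  · have h := ν.toSignedMeasure_toJordanDecomposition
    set j := ν.toJordanDecomposition with hj
    have hν : ν Δ = (j.posPart Δ).toReal - (j.negPart Δ).toReal := by
      conv_lhs => rw [← h]
      rw [MeasureTheory.JordanDecomposition.toSignedMeasure,
        MeasureTheory.Measure.toSignedMeasure_sub_apply hΔ]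
      rfl
    have htv : (ν.totalVariation Set.univ).toReal
        = (j.posPart Set.univ).toReal + (j.negPart Set.univ).toReal := by
      rw [MeasureTheory.SignedMeasure.totalVariation, Measure.add_apply,
        ENNReal.toReal_add (measure_ne_top _ _) (measure_ne_top _ _)]
    rw [hν, htv]
    have h1 : (j.posPart Δ).toReal ≤ (j.posPart Set.univ).toReal :=
      ENNReal.toReal_mono (measure_ne_top _ _) (measure_mono (Set.subset_univ _))
    have h2 : (j.negPart Δ).toReal ≤ (j.negPart Set.univ).toReal :=
      ENNReal.toReal_mono (measure_ne_top _ _) (measure_mono (Set.subset_univ _))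
    have h3 : (0:ℝ) ≤ (j.posPart Δ).toReal := ENNReal.toReal_nonneg
    have h4 : (0:ℝ) ≤ (j.negPart Δ).toReal := ENNReal.toReal_nonneg
    rw [abs_sub_le_iff]
    constructor <;> nlinarith
  · rw [ν.not_measurable hΔ]
    simp [ENNReal.toReal_nonneg]
end Aux

/-- A closable Hermitean quadratic form on a dense projection-stable domain of a
direct integral Hilbert space is orthogonally additive (Σ-bounded + finitely additive over
finite measurable partitions) if and only if it is countably orthogonally additive. -/
theorem stmt11 {A H : Type*} [MeasurableSpace A]
    [NormedAddCommGroup H] [InnerProductSpace ℂ H] [CompleteSpace H]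
    (P : Set A → H →L[ℂ] H)
    (hPsa : ∀ Δ, MeasurableSet Δ → IsSelfAdjoint (P Δ))
    (hPmul : ∀ Δ₁ Δ₂, MeasurableSet Δ₁ → MeasurableSet Δ₂ →
      (P Δ₁).comp (P Δ₂) = P (Δ₁ ∩ Δ₂))
    (hPuniv : P Set.univ = 1)
    (hPsigma : ∀ (Δi : ℕ → Set A), (∀ i, MeasurableSet (Δi i)) →
      Pairwise (Function.onFun Disjoint Δi) →
      ∀ x : H, HasSum (fun i => P (Δi i) x) (P (⋃ i, Δi i) x))
    (D : Submodule ℂ H) (hdense : Dense (D : Set H))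
    (Q : H → ℝ)
    -- closability
    (hclos : ∀ Φ : ℕ → H, (∀ n, Φ n ∈ D) → Tendsto (fun n => Φ n) atTop (nhds 0) →
      Tendsto (fun p : ℕ × ℕ => Q (Φ p.1 - Φ p.2)) atTop (nhds 0) →
      Tendsto (fun n => Q (Φ n)) atTop (nhds 0))
    -- stability of the domain (common to both notions)
    (hstab : ∀ Δ, MeasurableSet Δ → ∀ Φ ∈ D, P Δ Φ ∈ D) :
    -- orthogonal additivity ↔ countable orthogonal additivity
    ((∀ Φ ∈ D, ∃ M > (0 : ℝ), ∀ Δ, MeasurableSet Δ → |Q (P Δ Φ)| < M) ∧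
      (∀ (N : ℕ) (Δi : Fin N → Set A) (Δ : Set A), MeasurableSet Δ →
        (∀ i, MeasurableSet (Δi i)) → Pairwise (Function.onFun Disjoint Δi) →
        (⋃ i, Δi i) = Δ → ∀ Φ ∈ D, Q (P Δ Φ) = ∑ i, Q (P (Δi i) Φ)))
    ↔
    (∀ (Δi : ℕ → Set A) (Δ : Set A), MeasurableSet Δ →
      (∀ i, MeasurableSet (Δi i)) → Pairwise (Function.onFun Disjoint Δi) →
      (⋃ i, Δi i) = Δ → ∀ Φ ∈ D,
        HasSum (fun i => Q (P (Δi i) Φ)) (Q (P Δ Φ))) := by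
  classical
  -- `P ∅ = 0`
  have hP0 : ∀ x : H, P ∅ x = 0 := by
    intro x
    have h := hPsigma (fun _ => (∅ : Set A)) (fun _ => MeasurableSet.empty)
      (fun i j hij => by simp [Function.onFun]) x
    rw [Set.iUnion_empty] at h
    have h1 : Tendsto (fun _ : ℕ => P (∅ : Set A) x) atTop (nhds 0) :=
      h.summable.tendsto_atTop_zero
    exact (tendsto_nhds_unique h1 tendsto_const_nhds).symm
  -- pairwise union additivity for `P`
  have hPpair : ∀ Δ₁ Δ₂ : Set A, MeasurableSet Δ₁ → MeasurableSet Δ₂ → Disjoint Δ₁ Δ₂ →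
      ∀ x : H, P (Δ₁ ∪ Δ₂) x = P Δ₁ x + P Δ₂ x := by
    intro Δ₁ Δ₂ h1 h2 hd x
    set f : ℕ → Set A := fun n => if n = 0 then Δ₁ else if n = 1 then Δ₂ else ∅ with hf
    have hfm : ∀ i, MeasurableSet (f i) := by
      intro i
      simp only [hf]
      split_ifs <;> first | exact h1 | exact h2 | exact MeasurableSet.empty
    have hfd : Pairwise (Function.onFun Disjoint f) := by
      intro i j hij
      simp only [Function.onFun, hf]
      split_ifs <;> simp_all <;> first | exact hd | exact hd.symm
    have hfu : ⋃ i, f i = Δ₁ ∪ Δ₂ := by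
      apply Set.Subset.antisymm
      · apply Set.iUnion_subset
        intro i
        simp only [hf]
        split_ifs
        · exact Set.subset_union_left
        · exact Set.subset_union_right
        · exact Set.empty_subset _
      · intro a ha
        rcases ha with ha | ha
        · exact Set.mem_iUnion.2 ⟨0, by simp [hf, ha]⟩
        · exact Set.mem_iUnion.2 ⟨1, by simp [hf, ha]⟩
    have hs := hPsigma f hfm hfd x
    rw [hfu] at hs
    have hs2 : HasSum (fun i => P (f i) x) (∑ i ∈ Finset.range 2, P (f i) x) := by
      apply hasSum_sum_of_ne_finset_zero
      intro b hb
      have hb2 : ¬ b < 2 := by simpa using hb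
      have : f b = ∅ := by
        simp only [hf]
        rw [if_neg (by omega), if_neg (by omega)]
      simp only [this, hP0]
    have := hs.unique hs2
    rw [this, Finset.sum_range_succ, Finset.sum_range_succ]
    simp [hf]
  constructor
  · rintro ⟨hbdd, hfin⟩
    have hQ0 : Q (0 : H) = 0 := by
      have h := hfin 0 (fun i => i.elim0) ∅ MeasurableSet.empty (fun i => i.elim0)
        (by intro i j hij; exact i.elim0) (by simp) 0 (zero_mem D)
      simpa [hP0] using h
    have hQpair : ∀ Δ₁ Δ₂ : Set A, MeasurableSet Δ₁ → MeasurableSet Δ₂ → Disjoint Δ₁ Δ₂ →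
        ∀ Ψ ∈ D, Q (P (Δ₁ ∪ Δ₂) Ψ) = Q (P Δ₁ Ψ) + Q (P Δ₂ Ψ) := by
      intro Δ₁ Δ₂ h1 h2 hd Ψ hΨ
      set g : Fin 2 → Set A := ![Δ₁, Δ₂] with hg
      have hg0 : g 0 = Δ₁ := rfl
      have hg1 : g 1 = Δ₂ := rfl
      have hgm : ∀ i, MeasurableSet (g i) := by
        intro i
        fin_cases i
        · exact h1
        · exact h2
      have hgd : Pairwise (Function.onFun Disjoint g) := by
        intro i j hij
        fin_cases i <;> fin_cases j
        · exact absurd rfl hij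
        · exact hd
        · exact hd.symm
        · exact absurd rfl hij
      have hgu : ⋃ i, g i = Δ₁ ∪ Δ₂ := by
        ext a
        rw [Set.mem_iUnion, Fin.exists_fin_two, hg0, hg1]
        exact (Set.mem_union a Δ₁ Δ₂).symm
      have h := hfin 2 g (Δ₁ ∪ Δ₂) (h1.union h2) hgm hgd hgu Ψ hΨ
      rw [h, Fin.sum_univ_two, hg0, hg1]
    have hQfinU : ∀ g : ℕ → Set A, (∀ i, MeasurableSet (g i)) →
        Pairwise (Function.onFun Disjoint g) → ∀ Ψ ∈ D, ∀ n : ℕ,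
        Q (P (⋃ i ∈ Finset.range n, g i) Ψ) = ∑ i ∈ Finset.range n, Q (P (g i) Ψ) := by
      intro g hgm hgd Ψ hΨ n
      induction n with
      | zero => simpa [hP0] using hQ0
      | succ n ih =>
        have hmeasU : MeasurableSet (⋃ i ∈ Finset.range n, g i) :=
          (Finset.range n).measurableSet_biUnion (fun i _ => hgm i)
        have hdn : Disjoint (⋃ i ∈ Finset.range n, g i) (g n) := by
          rw [Set.disjoint_left]
          rintro a ha hag
          rw [Set.mem_iUnion₂] at ha
          obtain ⟨i, hi, hai⟩ := ha
          have : i ≠ n := by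
            intro hcon; rw [Finset.mem_range] at hi; omega
          exact (Set.disjoint_left.1 (hgd this)) hai hag
        have hun : (⋃ i ∈ Finset.range (n+1), g i) = (⋃ i ∈ Finset.range n, g i) ∪ g n := by
          rw [Finset.range_add_one, Finset.set_biUnion_insert, Set.union_comm]
        rw [hun, hQpair _ _ hmeasU (hgm n) hdn Ψ hΨ, ih, Finset.sum_range_succ]
    have hPfinU : ∀ g : ℕ → Set A, (∀ i, MeasurableSet (g i)) →
        Pairwise (Function.onFun Disjoint g) → ∀ x : H, ∀ n : ℕ,
        P (⋃ i ∈ Finset.range n, g i) x = ∑ i ∈ Finset.range n, P (g i) x := by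
      intro g hgm hgd x n
      induction n with
      | zero => simpa using hP0 x
      | succ n ih =>
        have hmeasU : MeasurableSet (⋃ i ∈ Finset.range n, g i) :=
          (Finset.range n).measurableSet_biUnion (fun i _ => hgm i)
        have hdn : Disjoint (⋃ i ∈ Finset.range n, g i) (g n) := by
          rw [Set.disjoint_left]
          rintro a ha hag
          rw [Set.mem_iUnion₂] at ha
          obtain ⟨i, hi, hai⟩ := ha
          have : i ≠ n := by
            intro hcon; rw [Finset.mem_range] at hi; omega
          exact (Set.disjoint_left.1 (hgd this)) hai hag
        have hun : (⋃ i ∈ Finset.range (n+1), g i) = (⋃ i ∈ Finset.range n, g i) ∪ g n := by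
          rw [Finset.range_add_one, Finset.set_biUnion_insert, Set.union_comm]
        rw [hun, hPpair _ _ hmeasU (hgm n) hdn x, ih, Finset.sum_range_succ]
    intro Δi Δ hΔ hmeas hdisj hU Φ hΦ
    set U : ℕ → Set A := fun n => ⋃ i ∈ Finset.range n, Δi i with hUdef
    set T : ℕ → Set A := fun n => Δ \ U n with hTdef
    have hUmeas : ∀ n, MeasurableSet (U n) := fun n =>
      (Finset.range n).measurableSet_biUnion (fun i _ => hmeas i)
    have hTmeas : ∀ n, MeasurableSet (T n) := fun n => hΔ.diff (hUmeas n)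
    have hUsub : ∀ n, U n ⊆ Δ := by
      intro n
      rw [← hU]
      exact Set.iUnion₂_subset fun i _ => Set.subset_iUnion Δi i
    have hsplitΔ : ∀ n, U n ∪ T n = Δ := fun n => Set.union_diff_cancel (hUsub n)
    have hUTdisj : ∀ n, Disjoint (U n) (T n) := fun n => Set.disjoint_sdiff_right
    have hTmono : ∀ m n : ℕ, m ≤ n → T n ⊆ T m := by
      intro m n hmn
      apply Set.diff_subset_diff_right
      intro a ha
      rw [Set.mem_iUnion₂] at ha ⊢
      obtain ⟨i, hi, hai⟩ := ha
      exact ⟨i, Finset.mem_range.2 (lt_of_lt_of_le (Finset.mem_range.1 hi) hmn), hai⟩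
    have hQsplit : ∀ Ψ, Ψ ∈ D → ∀ n, Q (P Δ Ψ) = Q (P (U n) Ψ) + Q (P (T n) Ψ) := by
      intro Ψ hΨ n
      have := hQpair (U n) (T n) (hUmeas n) (hTmeas n) (hUTdisj n) Ψ hΨ
      rw [hsplitΔ n] at this
      exact this
    have hQT : ∀ Ψ, Ψ ∈ D → ∀ m n : ℕ, m ≤ n →
        Q (P (T m) Ψ) = Q (P (T m \ T n) Ψ) + Q (P (T n) Ψ) := by
      intro Ψ hΨ m n hmn
      have := hQpair (T m \ T n) (T n) ((hTmeas m).diff (hTmeas n)) (hTmeas n)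
        disjoint_sdiff_self_left Ψ hΨ
      rw [Set.diff_union_of_subset (hTmono m n hmn)] at this
      exact this
    have hPT : ∀ m n : ℕ, m ≤ n → ∀ x : H, P (T m) x = P (T m \ T n) x + P (T n) x := by
      intro m n hmn x
      have := hPpair (T m \ T n) (T n) ((hTmeas m).diff (hTmeas n)) (hTmeas n)
        disjoint_sdiff_self_left x
      rw [Set.diff_union_of_subset (hTmono m n hmn)] at this
      exact this
    have hPsplitΔ : ∀ n, ∀ x : H, P Δ x = P (U n) x + P (T n) x := by
      intro n x
      have := hPpair (U n) (T n) (hUmeas n) (hTmeas n) (hUTdisj n) x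
      rw [hsplitΔ n] at this
      exact this
    have hΦn0 : Tendsto (fun n => P (T n) Φ) atTop (nhds 0) := by
      have hhs := hPsigma Δi hmeas hdisj Φ
      rw [hU] at hhs
      have hps := hhs.tendsto_sum_nat
      have heq : ∀ n, P (T n) Φ = P Δ Φ - ∑ i ∈ Finset.range n, P (Δi i) Φ := by
        intro n
        have h2 : P (U n) Φ = ∑ i ∈ Finset.range n, P (Δi i) Φ := by
          simp only [hUdef]
          exact hPfinU Δi hmeas hdisj Φ n
        have h1 := hPsplitΔ n Φ
        rw [h2] at h1
        rw [h1]
        abel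
      have hlim : Tendsto (fun n => P Δ Φ - ∑ i ∈ Finset.range n, P (Δi i) Φ) atTop
          (nhds (P Δ Φ - P Δ Φ)) := tendsto_const_nhds.sub hps
      rw [sub_self] at hlim
      exact hlim.congr (fun n => (heq n).symm)
    obtain ⟨M1, hM1pos, hM1⟩ := hbdd Φ hΦ
    obtain ⟨M2, hM2pos, hM2⟩ := hbdd (-Φ) (neg_mem hΦ)
    have hdiff1 : ∀ m n : ℕ, m ≤ n →
        Q (P (T m) Φ - P (T n) Φ) = Q (P (T m) Φ) - Q (P (T n) Φ) := by
      intro m n hmn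
      have hv : P (T m) Φ - P (T n) Φ = P (T m \ T n) Φ := by
        rw [hPT m n hmn Φ]; abel
      rw [hv]
      have := hQT Φ hΦ m n hmn
      linarith
    have hdiff2 : ∀ m n : ℕ, m ≤ n →
        Q (P (T n) Φ - P (T m) Φ) = Q (P (T m) (-Φ)) - Q (P (T n) (-Φ)) := by
      intro m n hmn
      have hv : P (T n) Φ - P (T m) Φ = P (T m \ T n) (-Φ) := by
        rw [map_neg, hPT m n hmn Φ]; abel
      rw [hv]
      have := hQT (-Φ) (neg_mem hΦ) m n hmn
      linarith
    have ha0 : Tendsto (fun n => Q (P (T n) Φ)) atTop (nhds 0) := by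
      apply tendsto_of_subseq_tendsto
      intro ns hns
      have hball : ∀ k : ℕ, ((Q (P (T (ns k)) Φ), Q (P (T (ns k)) (-Φ))) : ℝ × ℝ)
          ∈ Metric.closedBall (0 : ℝ × ℝ) (M1 + M2) := by
        intro k
        rw [Metric.mem_closedBall, dist_zero_right, Prod.norm_def]
        apply max_le
        · rw [Real.norm_eq_abs]
          exact le_of_lt (lt_of_lt_of_le (hM1 _ (hTmeas _)) (by linarith))
        · rw [Real.norm_eq_abs]
          exact le_of_lt (lt_of_lt_of_le (hM2 _ (hTmeas _)) (by linarith))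
      obtain ⟨p, hpmem, φ, hφmono, hφconv⟩ :=
        tendsto_subseq_of_bounded Metric.isBounded_closedBall hball
      refine ⟨φ, ?_⟩
      have hψ : Tendsto (fun k => ns (φ k)) atTop atTop := hns.comp hφmono.tendsto_atTop
      have hconv_a : Tendsto (fun k => Q (P (T (ns (φ k))) Φ)) atTop (nhds p.1) :=
        (continuous_fst.tendsto p).comp hφconv
      have hconv_b : Tendsto (fun k => Q (P (T (ns (φ k))) (-Φ))) atTop (nhds p.2) :=
        (continuous_snd.tendsto p).comp hφconv
      have hca := hconv_a.cauchySeq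
      have hcb := hconv_b.cauchySeq
      have hQdiff : Tendsto
          (fun q : ℕ × ℕ => Q (P (T (ns (φ q.1))) Φ - P (T (ns (φ q.2))) Φ)) atTop (nhds 0) := by
        rw [Metric.tendsto_atTop]
        intro ε hε
        obtain ⟨N1, hN1⟩ := Metric.cauchySeq_iff.1 hca ε hε
        obtain ⟨N2, hN2⟩ := Metric.cauchySeq_iff.1 hcb ε hε
        refine ⟨(max N1 N2, max N1 N2), ?_⟩
        rintro ⟨k, j⟩ hkj
        obtain ⟨hk, hj⟩ := hkj
        simp only at hk hj
        rw [Real.dist_eq, sub_zero]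
        rcases le_total (ns (φ k)) (ns (φ j)) with h | h
        · rw [hdiff1 _ _ h]
          have hd' := hN1 k (le_trans (le_max_left N1 N2) hk) j (le_trans (le_max_left N1 N2) hj)
          rw [Real.dist_eq] at hd'
          exact hd'
        · rw [hdiff2 _ _ h]
          have hd' := hN2 j (le_trans (le_max_right N1 N2) hj) k (le_trans (le_max_right N1 N2) hk)
          rw [Real.dist_eq] at hd'
          exact hd'
      exact hclos (fun k => P (T (ns (φ k))) Φ)
        (fun k => hstab _ (hTmeas _) Φ hΦ) (hΦn0.comp hψ) hQdiff
    have hsump : Summable (fun i => max (Q (P (Δi i) Φ)) 0) := by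
      set g : ℕ → Set A := fun i => if 0 ≤ Q (P (Δi i) Φ) then Δi i else ∅ with hgdef
      have hgm : ∀ i, MeasurableSet (g i) := by
        intro i
        simp only [hgdef]
        split_ifs
        · exact hmeas i
        · exact MeasurableSet.empty
      have hgd : Pairwise (Function.onFun Disjoint g) := by
        intro i j hij
        simp only [Function.onFun, hgdef]
        split_ifs
        · exact hdisj hij
        · exact Set.disjoint_empty _
        · exact Set.empty_disjoint _
        · exact Set.disjoint_empty _
      apply summable_of_sum_range_le (c := M1) (fun n => le_max_right _ _)
      intro n
      have h1 : ∑ i ∈ Finset.range n, max (Q (P (Δi i) Φ)) 0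
          = Q (P (⋃ i ∈ Finset.range n, g i) Φ) := by
        rw [hQfinU g hgm hgd Φ hΦ n]
        apply Finset.sum_congr rfl
        intro i _
        by_cases h : 0 ≤ Q (P (Δi i) Φ)
        · rw [max_eq_left h]
          simp only [hgdef]
          rw [if_pos h]
        · rw [max_eq_right (le_of_not_ge h)]
          simp only [hgdef]
          rw [if_neg h, hP0, hQ0]
      rw [h1]
      exact le_of_lt (lt_of_le_of_lt (le_abs_self _)
        (hM1 _ ((Finset.range n).measurableSet_biUnion (fun i _ => hgm i))))
    have hsumm : Summable (fun i => max (-(Q (P (Δi i) Φ))) 0) := by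
      set g : ℕ → Set A := fun i => if 0 ≤ Q (P (Δi i) Φ) then ∅ else Δi i with hgdef
      have hgm : ∀ i, MeasurableSet (g i) := by
        intro i
        simp only [hgdef]
        split_ifs
        · exact MeasurableSet.empty
        · exact hmeas i
      have hgd : Pairwise (Function.onFun Disjoint g) := by
        intro i j hij
        simp only [Function.onFun, hgdef]
        split_ifs
        · exact Set.disjoint_empty _
        · exact Set.empty_disjoint _
        · exact Set.disjoint_empty _
        · exact hdisj hij
      apply summable_of_sum_range_le (c := M1) (fun n => le_max_right _ _)
      intro n
      have h1 : ∑ i ∈ Finset.range n, max (-(Q (P (Δi i) Φ))) 0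
          = -(Q (P (⋃ i ∈ Finset.range n, g i) Φ)) := by
        rw [hQfinU g hgm hgd Φ hΦ n, ← Finset.sum_neg_distrib]
        apply Finset.sum_congr rfl
        intro i _
        by_cases h : 0 ≤ Q (P (Δi i) Φ)
        · rw [max_eq_right (by linarith)]
          simp only [hgdef]
          rw [if_pos h, hP0, hQ0, neg_zero]
        · rw [max_eq_left (by linarith)]
          simp only [hgdef]
          rw [if_neg h]
      rw [h1]
      exact le_of_lt (lt_of_le_of_lt (neg_le_abs _)
        (hM1 _ ((Finset.range n).measurableSet_biUnion (fun i _ => hgm i))))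
    have hsummable : Summable (fun i => Q (P (Δi i) Φ)) := by
      have h := hsump.sub hsumm
      apply h.congr
      intro i
      rcases le_total 0 (Q (P (Δi i) Φ)) with h' | h'
      · rw [max_eq_left h', max_eq_right (by linarith), sub_zero]
      · rw [max_eq_right h', max_eq_left (by linarith), zero_sub, neg_neg]
    have hpartial : Tendsto (fun n => ∑ i ∈ Finset.range n, Q (P (Δi i) Φ)) atTop
        (nhds (Q (P Δ Φ))) := by
      have heq : ∀ n, ∑ i ∈ Finset.range n, Q (P (Δi i) Φ) = Q (P Δ Φ) - Q (P (T n) Φ) := by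
        intro n
        have h1 := hQsplit Φ hΦ n
        have h2 : Q (P (U n) Φ) = ∑ i ∈ Finset.range n, Q (P (Δi i) Φ) := by
          simp only [hUdef]
          exact hQfinU Δi hmeas hdisj Φ hΦ n
        rw [h2] at h1
        linarith
      have hlim : Tendsto (fun n => Q (P Δ Φ) - Q (P (T n) Φ)) atTop
          (nhds (Q (P Δ Φ) - 0)) := tendsto_const_nhds.sub ha0
      rw [sub_zero] at hlim
      exact hlim.congr (fun n => (heq n).symm)
    have hhs := hsummable.hasSum
    have h3 : (∑' i, Q (P (Δi i) Φ)) = Q (P Δ Φ) :=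
      tendsto_nhds_unique hhs.tendsto_sum_nat hpartial
    rwa [h3] at hhs
  · intro hcnt
    have hQ0 : Q (0 : H) = 0 := by
      have h := hcnt (fun _ => (∅ : Set A)) ∅ MeasurableSet.empty
        (fun _ => MeasurableSet.empty) (fun i j hij => by simp [Function.onFun])
        (by simp) 0 (zero_mem D)
      have h1 : Tendsto (fun _ : ℕ => Q (0 : H)) atTop (nhds 0) := by
        have h2 := h.summable.tendsto_atTop_zero
        simpa using h2
      exact tendsto_nhds_unique tendsto_const_nhds h1
    constructor
    · intro Φ hΦ
      set ν : MeasureTheory.SignedMeasure A :=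
        { measureOf' := fun Δ => if MeasurableSet Δ then Q (P Δ Φ) else 0
          empty' := by
            show (if MeasurableSet (∅ : Set A) then Q (P ∅ Φ) else 0) = 0
            rw [if_pos MeasurableSet.empty, hP0, hQ0]
          not_measurable' := fun i hi => if_neg hi
          m_iUnion' := by
            intro f hf hd
            have h := hcnt f (⋃ i, f i) (MeasurableSet.iUnion hf) hf hd rfl Φ hΦ
            have heq : (fun i => if MeasurableSet (f i) then Q (P (f i) Φ) else 0)
                = fun i => Q (P (f i) Φ) := funext fun i => if_pos (hf i)
            show HasSum (fun i => if MeasurableSet (f i) then Q (P (f i) Φ) else 0)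
              (if MeasurableSet (⋃ i, f i) then Q (P (⋃ i, f i) Φ) else 0)
            rw [heq, if_pos (MeasurableSet.iUnion hf)]
            exact h } with hν
      refine ⟨(ν.totalVariation Set.univ).toReal + 1, by positivity, ?_⟩
      intro Δ hΔ
      have h := stmt11_sm_abs_le ν Δ
      have hνΔ : ν Δ = Q (P Δ Φ) := by
        show (if MeasurableSet Δ then Q (P Δ Φ) else 0) = Q (P Δ Φ)
        exact if_pos hΔ
      calc |Q (P Δ Φ)| = |ν Δ| := by rw [hνΔ]
        _ ≤ (ν.totalVariation Set.univ).toReal := h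
        _ < (ν.totalVariation Set.univ).toReal + 1 := lt_add_one _
    · intro N Δi Δ hΔ hmeas hdisj hU Φ hΦ
      set g : ℕ → Set A := fun i => if h : i < N then Δi ⟨i, h⟩ else ∅ with hgdef
      have hgm : ∀ i, MeasurableSet (g i) := by
        intro i
        simp only [hgdef]
        split_ifs
        · exact hmeas _
        · exact MeasurableSet.empty
      have hgd : Pairwise (Function.onFun Disjoint g) := by
        intro i j hij
        simp only [Function.onFun, hgdef]
        split_ifs with hi hj hj
        · exact hdisj (by simp only [ne_eq, Fin.mk.injEq]; exact hij)
        · exact Set.disjoint_empty _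
        · exact Set.empty_disjoint _
        · exact Set.disjoint_empty _
      have hgu : ⋃ i, g i = Δ := by
        rw [← hU]
        apply Set.Subset.antisymm
        · apply Set.iUnion_subset
          intro i
          simp only [hgdef]
          split_ifs with h
          · exact Set.subset_iUnion (fun k : Fin N => Δi k) ⟨i, h⟩
          · exact Set.empty_subset _
        · apply Set.iUnion_subset
          intro k
          have hsub : Δi k ⊆ g (k : ℕ) := by
            simp only [hgdef]
            rw [dif_pos k.isLt, Fin.eta]
          exact hsub.trans (Set.subset_iUnion g (k : ℕ))
      have h := hcnt g Δ hΔ hgm hgd hgu Φ hΦ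
      have h2 : HasSum (fun i => Q (P (g i) Φ))
          (∑ i ∈ Finset.range N, Q (P (g i) Φ)) := by
        apply hasSum_sum_of_ne_finset_zero
        intro b hb
        have hbN : ¬ b < N := by simpa using hb
        have : g b = ∅ := by simp only [hgdef]; rw [dif_neg hbN]
        simp only [this, hP0, hQ0]
      rw [h.unique h2, ← Fin.sum_univ_eq_sum_range (fun i => Q (P (g i) Φ)) N]
      apply Finset.sum_congr rfl
      intro i _
      have : g (i : ℕ) = Δi i := by
        simp only [hgdef]
        rw [dif_pos i.isLt, Fin.eta]
      rw [this]
end
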